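/- (Proposition 5, reduced-cost implication fixing) Let G=(V,E) be a finite simple undirected graph with edge weights w:E→ℚ. Let Ũ∈ℚ and w̃:E→ℚ with w̃(e)≥0 for all e∈E satisfy the reduced-cost bound: for every S⊆V, w(δ(S)) ≤ Ũ − Σ_{e∈δ(S)} w̃(e). Let L=w(δ(S0)) for some S0⊆V (a known cut weight). Let V'⊂V and y':V'→{0,1} be such that every optimal vertex assignment y satisfies y(v)=y'(v) for all v∈V'. Let u∈V∖V' and define Δ̃0 := Σ_{{u,v}∈δ(u), v∈V', y'(v)=0} w̃({u,v}) and Δ̃1 := Σ_{{u,v}∈δ(u), v∈V', y'(v)=1} w̃({u,v}). Then for every optimal vertex assignment y: if L+Δ̃0 > Ũ then y(u)=0, and if L+Δ̃1 > Ũ then y(u)=1. -/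

import Mathlib

variable {V : Type*}

/-- `e` is an edge of `G` that crosses the cut induced by the vertex set `U`,
i.e. `e ∈ δ(U) := {{u,v} ∈ E : u ∈ U, v ∉ U}`. -/
def inCutSet (G : SimpleGraph V) (U : Set V) (e : Sym2 V) : Prop :=
  e ∈ G.edgeSet ∧ (∃ u ∈ e, u ∈ U) ∧ ∃ v ∈ e, v ∉ U

/-- The edge cut `δ(U)` as a finset. -/
noncomputable def cutFinset [Fintype V] (G : SimpleGraph V) (U : Set V) :
    Finset (Sym2 V) := by
  classical
  exact Finset.univ.filter (inCutSet G U)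

/-- The weight `w(δ(U))` of the cut induced by `U`. -/
noncomputable def cutWeight [Fintype V] (G : SimpleGraph V) (w : Sym2 V → ℚ) (U : Set V) : ℚ :=
  ∑ e ∈ cutFinset G U, w e

/-- The weight of the cut induced by the vertex assignment `y`. -/
noncomputable def assignWeight [Fintype V] (G : SimpleGraph V) (w : Sym2 V → ℚ)
    (y : V → Bool) : ℚ := by
  classical
  exact ∑ e ∈ Finset.univ.filter
    (fun e : Sym2 V => e ∈ G.edgeSet ∧ ∃ a ∈ e, ∃ b ∈ e, y a ≠ y b), w e

/-- The sum `∑_{{u,v} ∈ δ(u), v ∈ A} w̃({u,v})` over the edges incident to `u`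
whose other endpoint lies in `A`. -/
noncomputable def incidentSum [Fintype V] (G : SimpleGraph V) (tw : Sym2 V → ℚ)
    (u : V) (A : Set V) : ℚ := by
  classical
  exact ∑ v ∈ Finset.univ.filter (fun v => G.Adj u v ∧ v ∈ A), tw s(u, v)

/-- Proposition 5 (reduced-cost implication fixing): given an upper bound `Ut` and
nonnegative reduced costs `tw` satisfying the reduced-cost bound, a known cut weight `L`,
and a partial assignment `y'` on `V'` that every optimal vertex assignment respects,
the vertex `u ∉ V'` can be fixed whenever `L + Δ̃0 > Ut` resp. `L + Δ̃1 > Ut`. -/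

private lemma assignWeight_eq_cutWeight [Fintype V] (G : SimpleGraph V) (w : Sym2 V → ℚ)
    (y : V → Bool) : assignWeight G w y = cutWeight G w {v | y v = true} := by
  classical
  unfold assignWeight cutWeight cutFinset
  congr 1
  ext e
  simp only [Finset.mem_filter, Finset.mem_univ, true_and, inCutSet, Set.mem_setOf_eq]
  constructor
  · rintro ⟨he, a, ha, b, hb, hab⟩
    refine ⟨he, ?_, ?_⟩
    · rcases Bool.eq_false_or_eq_true (y a) with h | h
      · exact ⟨a, ha, h⟩
      · refine ⟨b, hb, ?_⟩
        cases hc : y b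
        · exact absurd (h.trans hc.symm) hab
        · rfl
    · rcases Bool.eq_false_or_eq_true (y a) with h | h
      · refine ⟨b, hb, ?_⟩
        cases hc : y b
        · simp
        · exact absurd (h.trans hc.symm) hab
      · exact ⟨a, ha, by simp [h]⟩
  · rintro ⟨he, ⟨a, ha, h1⟩, ⟨b, hb, h2⟩⟩
    refine ⟨he, a, ha, b, hb, ?_⟩
    rw [h1]
    exact fun hh => h2 hh.symm

private lemma key_lemma [Fintype V] (G : SimpleGraph V) (w : Sym2 V → ℚ)
    (Ut : ℚ) (tw : Sym2 V → ℚ) (htw : ∀ e ∈ G.edgeSet, 0 ≤ tw e)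
    (hbound : ∀ S : Set V, cutWeight G w S ≤ Ut - ∑ e ∈ cutFinset G S, tw e)
    (L : ℚ) (S0 : Set V) (hL : L = cutWeight G w S0)
    (V' : Set V) (y' : V → Bool)
    (hforced : ∀ y : V → Bool,
      (∀ z : V → Bool, assignWeight G w z ≤ assignWeight G w y) →
      ∀ v ∈ V', y v = y' v)
    (u : V) (y : V → Bool)
    (hopt : ∀ z : V → Bool, assignWeight G w z ≤ assignWeight G w y)
    (b : Bool) (hyu : y u = !b) :
    L + incidentSum G tw u {v | v ∈ V' ∧ y' v = b} ≤ Ut := by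
  classical
  set S : Set V := {v | y v = true} with hS
  have h1 : L ≤ cutWeight G w S := by
    have hz : assignWeight G w (fun v => decide (v ∈ S0)) = cutWeight G w S0 := by
      rw [assignWeight_eq_cutWeight]
      congr 1
      ext v
      simp
    calc L = assignWeight G w (fun v => decide (v ∈ S0)) := by rw [hz, hL]
      _ ≤ assignWeight G w y := hopt _
      _ = cutWeight G w S := assignWeight_eq_cutWeight G w y
  have h2 := hbound S
  have h3 : incidentSum G tw u {v | v ∈ V' ∧ y' v = b} ≤ ∑ e ∈ cutFinset G S, tw e := by
    unfold incidentSum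
    refine le_trans (le_of_eq (Finset.sum_image ?_).symm)
      (Finset.sum_le_sum_of_subset_of_nonneg ?_ ?_)
    · intro a ha c _ hac
      rw [Finset.mem_coe] at ha
      simp only [Finset.mem_filter, Finset.mem_univ, true_and, Set.mem_setOf_eq] at ha
      have hau : a ≠ u := (G.ne_of_adj ha.1).symm
      rcases Sym2.eq_iff.mp hac with ⟨_, h⟩ | ⟨_, h⟩
      · exact h
      · exact absurd h hau
    · intro e he
      simp only [Finset.mem_image, Finset.mem_filter, Finset.mem_univ, true_and,
        Set.mem_setOf_eq] at he
      obtain ⟨v, ⟨hadj, hvV', hvb⟩, rfl⟩ := he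
      have hyv : y v = b := by rw [hforced y hopt v hvV', hvb]
      simp only [cutFinset, Finset.mem_filter, Finset.mem_univ, true_and]
      refine ⟨G.mem_edgeSet.mpr hadj, ?_, ?_⟩
      · cases b with
        | false => exact ⟨u, by simp, by simp [hS, hyu]⟩
        | true => exact ⟨v, by simp, by simp [hS, hyv]⟩
      · cases b with
        | false => exact ⟨v, by simp, by simp [hS, hyv]⟩
        | true => exact ⟨u, by simp, by simp [hS, hyu]⟩
    · intro e he _
      simp only [cutFinset, Finset.mem_filter] at he
      exact htw e he.2.1
  linarith

theorem stmt8 [Fintype V] (G : SimpleGraph V) (w : Sym2 V → ℚ)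
    (Ut : ℚ) (tw : Sym2 V → ℚ) (htw : ∀ e ∈ G.edgeSet, 0 ≤ tw e)
    (hbound : ∀ S : Set V, cutWeight G w S ≤ Ut - ∑ e ∈ cutFinset G S, tw e)
    (L : ℚ) (S0 : Set V) (hL : L = cutWeight G w S0)
    (V' : Set V) (hV' : V' ⊂ Set.univ) (y' : V → Bool)
    (hforced : ∀ y : V → Bool,
      (∀ z : V → Bool, assignWeight G w z ≤ assignWeight G w y) →
      ∀ v ∈ V', y v = y' v)
    (u : V) (hu : u ∉ V') :
    ∀ y : V → Bool,
      (∀ z : V → Bool, assignWeight G w z ≤ assignWeight G w y) →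
      (L + incidentSum G tw u {v | v ∈ V' ∧ y' v = false} > Ut → y u = false) ∧
      (L + incidentSum G tw u {v | v ∈ V' ∧ y' v = true} > Ut → y u = true) := by
  intro y hopt
  constructor
  · intro hgt
    by_contra hne
    have hyu : y u = !false := by cases h : y u <;> simp_all
    have := key_lemma G w Ut tw htw hbound L S0 hL V' y' hforced u y hopt false hyu
    linarith
  · intro hgt
    by_contra hne
    have hyu : y u = !true := by cases h : y u <;> simp_all
    have := key_lemma G w Ut tw htw hbound L S0 hL V' y' hforced u y hopt true hyu
    linarith
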